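/- Let P and Q be two edge-disjoint u-v paths in a graph G chosen so that |E(P)| + |E(Q)| is minimum. If one of P, Q is the single edge uv, then the union P ∪ Q is an induced cycle of G. -/

import Mathlib

open SimpleGraph

private lemma edge_of_length_one' {V : Type*} {G : SimpleGraph V} {a b : V}
    (w : G.Walk a b) (hw : w.length = 1) : s(a, b) ∈ w.edges := by
  cases w with
  | nil => simp at hw
  | cons h w' =>
    cases w' with
    | nil => simp
    | cons h' w'' => simp [SimpleGraph.Walk.length_cons] at hw

/-- Generic shortcut lemma: if a path decomposes as `t ++ m ++ d` with a chord `ab`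
joining the endpoints of the middle piece, then there is a strictly shorter path
whose edges are among the chord and the original edges. -/
private lemma shortcut' {V : Type*} {G : SimpleGraph V} {u v a b : V}
    (t : G.Walk u a) (m : G.Walk a b) (d : G.Walk b v) (hab : G.Adj a b)
    (hq : (t.append (m.append d)).IsPath)
    (hchord : s(a, b) ∉ (t.append (m.append d)).edges) :
    ∃ q' : G.Walk u v, q'.IsPath ∧
      (∀ e ∈ q'.edges, e = s(a, b) ∨ e ∈ (t.append (m.append d)).edges) ∧
      q'.length < (t.append (m.append d)).length := by
  have hnod := hq.support_nodup
  rw [Walk.support_append, Walk.tail_support_append, List.nodup_append] at hnod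
  obtain ⟨htn, -, hdisj⟩ := hnod
  have hdpath : d.IsPath := (hq.of_append_right).of_append_right
  have hbm : b ∈ m.support.tail := by
    have hh := m.end_mem_support
    rw [Walk.support_eq_cons m] at hh
    rcases List.mem_cons.mp hh with h | h
    · exact absurd h.symm hab.ne
    · exact h
  refine ⟨t.append (Walk.cons hab d), ?_, ?_, ?_⟩
  · apply Walk.IsPath.mk'
    rw [Walk.support_append, Walk.support_cons, List.tail_cons]
    refine List.Nodup.append hq.of_append_left.support_nodup hdpath.support_nodup ?_
    intro x hxt hxd
    rw [Walk.support_eq_cons d] at hxd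
    rcases List.mem_cons.mp hxd with rfl | hxd
    · exact hdisj x hxt x (List.mem_append_left _ hbm) rfl
    · exact hdisj x hxt x (List.mem_append_right _ hxd) rfl
  · intro e he
    rw [Walk.edges_append, Walk.edges_cons, List.mem_append] at he
    rw [Walk.edges_append, Walk.edges_append, List.mem_append, List.mem_append]
    rcases he with he | he
    · exact Or.inr (Or.inl he)
    · rcases List.mem_cons.mp he with rfl | he
      · exact Or.inl rfl
      · exact Or.inr (Or.inr (Or.inr he))
  · have hm0 : m.length ≠ 0 := fun h => hab.ne (Walk.eq_of_length_eq_zero h)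
    have hm1 : m.length ≠ 1 := by
      intro h
      exact hchord (by
        rw [Walk.edges_append, Walk.edges_append, List.mem_append, List.mem_append]
        exact Or.inr (Or.inl (edge_of_length_one' m h)))
    simp only [Walk.length_append, Walk.length_cons]
    omega

/-- If `P, Q` are edge-disjoint `u`-`v` paths with `|E(P)| + |E(Q)|` minimum and `P` is
the single edge `uv`, then `P ∪ Q` is an induced cycle of `G`. -/
theorem stmt10 {V : Type*} (G : SimpleGraph V) (u v : V) (huv : u ≠ v)
    (p q : G.Walk u v) (hp : p.IsPath) (hq : q.IsPath)
    (hdisj : ∀ e, e ∈ p.edges → e ∉ q.edges)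
    (hmin : ∀ p' q' : G.Walk u v, p'.IsPath → q'.IsPath →
      (∀ e, e ∈ p'.edges → e ∉ q'.edges) →
      p.length + q.length ≤ p'.length + q'.length)
    (hp1 : p.length = 1) :
    (q.append p.reverse).IsCycle ∧
      ∀ a b, a ∈ (q.append p.reverse).support → b ∈ (q.append p.reverse).support →
        G.Adj a b → s(a, b) ∈ (q.append p.reverse).edges := by
  cases p with
  | nil => simp at hp1
  | cons h p' =>
    cases p' with
    | cons h' p'' => simp [Walk.length_cons] at hp1
    | nil =>
      clear hp hp1
      have hsuv : s(u, v) ∉ q.edges := hdisj _ (by simp)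
      have hedges : (q.append (Walk.cons h Walk.nil).reverse).edges
          = q.edges ++ [s(v, u)] := by
        rw [Walk.reverse_singleton, Walk.edges_append]
        simp
      constructor
      · rw [Walk.isCycle_def]
        refine ⟨?_, ?_, ?_⟩
        · rw [Walk.isTrail_def, hedges]
          refine List.Nodup.append hq.isTrail.edges_nodup (by simp) ?_
          intro e he he'
          simp only [List.mem_singleton] at he'
          subst he'
          exact hsuv (by rwa [Sym2.eq_swap] at he)
        · intro hn
          have := congrArg Walk.length hn
          simp [Walk.length_append] at this
        · rw [Walk.reverse_singleton, Walk.tail_support_append]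
          simp only [Walk.support_cons, Walk.support_nil, List.tail_cons]
          have hnd := hq.support_nodup
          rw [Walk.support_eq_cons q] at hnd
          rcases List.nodup_cons.mp hnd with ⟨hu, ht⟩
          refine List.Nodup.append ht (by simp) ?_
          intro x hx hx'
          simp only [List.mem_singleton] at hx'
          subst hx'
          exact hu hx
      · classical
        intro a b hasup hbsup hadj
        by_contra hne
        have hchordq : s(a, b) ∉ q.edges := fun hmem =>
          hne (by rw [hedges]; exact List.mem_append_left _ hmem)
        have hnuv : s(a, b) ≠ s(u, v) := by
          intro hh
          apply hne
          rw [hedges, hh, Sym2.eq_swap]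
          exact List.mem_append_right _ (by simp)
        have hmemq : ∀ x, x ∈ (q.append (Walk.cons h Walk.nil).reverse).support →
            x ∈ q.support := by
          intro x hx
          rcases (Walk.mem_support_append_iff _ _).mp hx with hx | hx
          · exact hx
          · rw [Walk.reverse_singleton] at hx
            simp only [Walk.support_cons, Walk.support_nil, List.mem_cons,
              List.mem_singleton] at hx
            rcases hx with rfl | hx
            · exact q.end_mem_support
            · rcases hx with rfl | hx
              · exact q.start_mem_support
              · simp at hx
        have ha : a ∈ q.support := hmemq a hasup
        have hb : b ∈ q.support := hmemq b hbsup
        have hcases : a ∈ (q.takeUntil b hb).support ∨ a ∈ (q.dropUntil b hb).support := by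
          refine (Walk.mem_support_append_iff _ _).mp ?_
          rw [Walk.take_spec]
          exact ha
        -- helper to derive the contradiction from a shorter path
        have hcontra : ∀ q' : G.Walk u v, q'.IsPath →
            (∀ e ∈ q'.edges, e = s(a, b) ∨ e ∈ q.edges) → q'.length < q.length → False := by
          intro q' hq'p hq'e hq'l
          have := hmin (Walk.cons h Walk.nil) q' (by simp [huv]) hq'p ?_
          · simp only [Walk.length_cons, Walk.length_nil] at this hq'l ⊢
            omega
          · intro e he he'
            simp only [Walk.edges_cons, Walk.edges_nil, List.mem_singleton] at he
            subst he
            rcases hq'e _ he' with hh | hh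
            · exact hnuv hh.symm
            · exact hsuv hh
        rcases hcases with hcase | hcase
        · -- a occurs before b : q = t ++ m ++ d with t : u→a, m : a→b, d : b→v
          have hqeq : ((q.takeUntil b hb).takeUntil a hcase).append
              ((((q.takeUntil b hb).dropUntil a hcase)).append (q.dropUntil b hb)) = q := by
            rw [Walk.append_assoc, Walk.take_spec, Walk.take_spec]
          obtain ⟨q', h1, h2, h3⟩ := shortcut' ((q.takeUntil b hb).takeUntil a hcase)
            ((q.takeUntil b hb).dropUntil a hcase) (q.dropUntil b hb) hadj
            (by rw [hqeq]; exact hq) (by rw [hqeq]; exact hchordq)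
          rw [hqeq] at h2 h3
          exact hcontra q' h1 h2 h3
        · -- b occurs before a
          have hqeq : (q.takeUntil b hb).append
              (((q.dropUntil b hb).takeUntil a hcase).append
                ((q.dropUntil b hb).dropUntil a hcase)) = q := by
            rw [Walk.take_spec, Walk.take_spec]
          obtain ⟨q', h1, h2, h3⟩ := shortcut' (q.takeUntil b hb)
            ((q.dropUntil b hb).takeUntil a hcase) ((q.dropUntil b hb).dropUntil a hcase)
            hadj.symm (by rw [hqeq]; exact hq)
            (by rw [hqeq, Sym2.eq_swap]; exact hchordq)
          rw [hqeq] at h2 h3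
          rw [Sym2.eq_swap] at h2
          exact hcontra q' h1 h2 h3
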